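/- Let G be a group, U ⊆ G a subset containing representatives so that G ⊆ U^m for some m ∈ ℕ, and set η = sqrt(1 − 1/(4(m+1)²)). If (π, H) is a unitary representation of G with no nonzero G-fixed vectors, then for every nonzero ξ ∈ H there exists u ∈ U with ‖(ξ + π(u)ξ)/2‖ < η‖ξ‖. -/

import Mathlib

open Pointwise

set_option maxHeartbeats 1000000 in
/-- Olshanski's Lemma: if `G ⊆ U ^ m` and the unitary representation `π` of `G` on a
complex Hilbert space has no nonzero fixed vector, then for every nonzero `ξ` there is
`u ∈ U` with `‖(ξ + π(u)ξ)/2‖ < η‖ξ‖`, where `η = √(1 - 1/(4(m+1)²))`. -/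
theorem stmt_3 {G : Type*} [Group G] {H : Type*} [NormedAddCommGroup H]
    [InnerProductSpace ℂ H] [CompleteSpace H]
    (π : G →* (H ≃ₗᵢ[ℂ] H)) (U : Set G) (m : ℕ)
    (hU : (Set.univ : Set G) ⊆ U ^ m)
    (hfix : ∀ v : H, (∀ g : G, π g v = v) → v = 0)
    (ξ : H) (hξ : ξ ≠ 0) :
    ∃ u ∈ U, ‖(1 / 2 : ℝ) • (ξ + π u ξ)‖ <
      Real.sqrt (1 - 1 / (4 * ((m : ℝ) + 1) ^ 2)) * ‖ξ‖ := by
  letI : InnerProductSpace ℝ H := InnerProductSpace.complexToReal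
  by_contra hcon
  push_neg at hcon
  set M : ℝ := (m : ℝ) + 1 with hM
  have hMpos : 0 < M := by positivity
  have hM2 : (0 : ℝ) < M ^ 2 := by positivity
  have hξpos : 0 < ‖ξ‖ := norm_pos_iff.mpr hξ
  set s : ℝ := Real.sqrt (1 - 1 / (4 * M ^ 2)) with hs
  have hsnn : 0 ≤ s := Real.sqrt_nonneg _
  have hsq : s ^ 2 = 1 - 1 / (4 * M ^ 2) := by
    rw [hs, Real.sq_sqrt]
    have h1 : 1 ≤ 4 * M ^ 2 := by nlinarith
    have : 1 / (4 * M ^ 2) ≤ 1 := by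
      rw [div_le_one (by positivity)]; exact h1
    linarith
  have hs4 : s ^ 2 * (4 * M ^ 2) = 4 * M ^ 2 - 1 := by
    rw [hsq]; field_simp
  -- Step 1: for u ∈ U, ‖ξ - π u ξ‖ ≤ ‖ξ‖ / M
  have key : ∀ u ∈ U, ‖ξ - π u ξ‖ ≤ ‖ξ‖ / M := by
    intro u hu
    set a : ℝ := ‖ξ - (π u) ξ‖ with ha
    set b : ℝ := ‖ξ + (π u) ξ‖ with hb
    set n : ℝ := ‖ξ‖ with hn
    have hann : 0 ≤ a := norm_nonneg _
    have hbnn : 0 ≤ b := norm_nonneg _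
    have hmap : ‖(π u) ξ‖ = n := (π u).norm_map ξ
    have hpar : b * b + a * a = 2 * (n * n + n * n) := by
      have := parallelogram_law_with_norm ℝ ξ ((π u) ξ)
      rw [hmap] at this
      rw [ha, hb]
      rw [hn] at this ⊢
      linear_combination this
    have h1 : s * n ≤ ‖(1 / 2 : ℝ) • (ξ + (π u) ξ)‖ := hcon u hu
    have h2 : ‖(1 / 2 : ℝ) • (ξ + (π u) ξ)‖ = (1 / 2) * b := by
      rw [norm_smul]; norm_num; rw [hb]
    rw [h2] at h1
    have hsum : 2 * (s * n) ≤ b := by linarith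
    have e2 : 4 * s ^ 2 * n ^ 2 ≤ b ^ 2 := by
      have h3 := mul_le_mul hsum hsum (by positivity : (0:ℝ) ≤ 2 * (s * n)) hbnn
      nlinarith [h3]
    have ha2 : a ^ 2 ≤ 4 * n ^ 2 - 4 * s ^ 2 * n ^ 2 := by nlinarith [hpar, e2]
    have hRHS : (4 * n ^ 2 - 4 * s ^ 2 * n ^ 2) * M ^ 2 = n ^ 2 := by
      linear_combination (-(n ^ 2 : ℝ)) * hs4
    have haM : a ^ 2 * M ^ 2 ≤ n ^ 2 := by
      calc a ^ 2 * M ^ 2 ≤ (4 * n ^ 2 - 4 * s ^ 2 * n ^ 2) * M ^ 2 :=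
            mul_le_mul_of_nonneg_right ha2 hM2.le
        _ = n ^ 2 := hRHS
    rw [le_div_iff₀ hMpos]
    nlinarith [haM, hξpos, hann, hMpos]
  -- Step 2: products of elements of U move ξ by at most length * (‖ξ‖ / M)
  have hlist : ∀ l : List G, (∀ x ∈ l, x ∈ U) →
      ‖ξ - π l.prod ξ‖ ≤ l.length * (‖ξ‖ / M) := by
    intro l
    induction l with
    | nil => intro _; simp
    | cons a t ih =>
      intro hmem
      have ha : a ∈ U := hmem a List.mem_cons_self
      have ht : ∀ x ∈ t, x ∈ U := fun x hx => hmem x (List.mem_cons_of_mem a hx)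
      have hprod : (π ((a :: t).prod)) ξ = (π a) ((π t.prod) ξ) := by
        rw [List.prod_cons, map_mul]; rfl
      have hdecomp : ξ - (π ((a :: t).prod)) ξ
          = (ξ - (π a) ξ) + (π a) (ξ - (π t.prod) ξ) := by
        rw [hprod, map_sub]; abel
      calc ‖ξ - (π ((a :: t).prod)) ξ‖
          ≤ ‖ξ - (π a) ξ‖ + ‖(π a) (ξ - (π t.prod) ξ)‖ := by
            rw [hdecomp]; exact norm_add_le _ _
        _ = ‖ξ - (π a) ξ‖ + ‖ξ - (π t.prod) ξ‖ := by rw [(π a).norm_map]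
        _ ≤ ‖ξ‖ / M + t.length * (‖ξ‖ / M) := add_le_add (key a ha) (ih ht)
        _ = (a :: t).length * (‖ξ‖ / M) := by
            simp only [List.length_cons, Nat.cast_add, Nat.cast_one]; ring
  set r : ℝ := (m : ℝ) * (‖ξ‖ / M) with hr
  have horbit : ∀ g : G, ‖ξ - (π g) ξ‖ ≤ r := by
    intro g
    obtain ⟨f, hf⟩ := Set.mem_pow.mp (hU (Set.mem_univ g))
    have := hlist (List.ofFn fun i => (f i : G)) (by
      intro x hx
      obtain ⟨i, rfl⟩ := List.mem_ofFn.mp hx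
      exact (f i).2)
    rw [hf] at this
    simpa using this
  have hrlt : r < ‖ξ‖ := by
    rw [hr, div_eq_mul_inv]
    calc (m : ℝ) * (‖ξ‖ * M⁻¹) < M * (‖ξ‖ * M⁻¹) := by
          apply mul_lt_mul_of_pos_right
          · rw [hM]; linarith
          · positivity
      _ = ‖ξ‖ := by field_simp
  -- The orbit and its closed convex hull
  set S : Set H := Set.range fun g : G => (π g) ξ with hS
  set C : Set H := closure (convexHull ℝ S) with hCdef
  have hSC : S ⊆ Metric.closedBall ξ r := by
    rintro x ⟨g, rfl⟩
    rw [Metric.mem_closedBall, dist_eq_norm, norm_sub_rev]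
    exact horbit g
  have hCball : C ⊆ Metric.closedBall ξ r :=
    closure_minimal (convexHull_min hSC (convex_closedBall ξ r)) Metric.isClosed_closedBall
  have hSsubC : S ⊆ C := (subset_convexHull ℝ S).trans subset_closure
  have hξC : ξ ∈ C := hSsubC ⟨1, by simp⟩
  have hconv : Convex ℝ C := (convex_convexHull ℝ S).closure
  have hcomplete : IsComplete C := isClosed_closure.isComplete
  -- invariance of C
  have hmaps : ∀ g : G, ∀ x ∈ C, (π g) x ∈ C := by
    intro g x hx
    have hSinv : (fun y => (π g) y) '' S ⊆ S := by
      rintro _ ⟨_, ⟨h, rfl⟩, rfl⟩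
      refine ⟨g * h, ?_⟩
      show (π (g * h)) ξ = (π g) ((π h) ξ)
      rw [map_mul]; rfl
    have hlin : IsLinearMap ℝ (fun y : H => (π g) y) :=
      ⟨fun a b => map_add _ a b, fun c a => (π g).toLinearEquiv.map_smul_of_tower c a⟩
    have hhull : (fun y => (π g) y) '' convexHull ℝ S ⊆ convexHull ℝ S := by
      rw [hlin.image_convexHull]
      exact convexHull_mono hSinv
    have himg : (fun y => (π g) y) '' C ⊆ C := by
      calc (fun y => (π g) y) '' closure (convexHull ℝ S)
          ⊆ closure ((fun y => (π g) y) '' convexHull ℝ S) :=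
            image_closure_subset_closure_image (π g).continuous
        _ ⊆ closure (convexHull ℝ S) := closure_mono hhull
    exact himg ⟨x, hx, rfl⟩
  -- minimal norm vector
  obtain ⟨v, hvC, hv⟩ := exists_norm_eq_iInf_of_complete_convex ⟨ξ, hξC⟩ hcomplete hconv 0
  set δ : ℝ := ⨅ w : C, ‖(0 : H) - w‖ with hδ
  have hbdd : BddBelow (Set.range fun w : C => ‖(0 : H) - w‖) :=
    ⟨0, Set.forall_mem_range.2 fun _ => norm_nonneg _⟩
  have hδle : ∀ w ∈ C, δ ≤ ‖w‖ := by
    intro w hw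
    have h1 := ciInf_le hbdd (⟨w, hw⟩ : C)
    have h0 : ‖(0 : H) - w‖ = ‖w‖ := by rw [zero_sub, norm_neg]
    exact h0 ▸ h1
  have hvnorm : ‖v‖ = δ := by rw [← hv, zero_sub, norm_neg]
  -- v is fixed
  have hvfix : ∀ g : G, (π g) v = v := by
    intro g
    have hgv : (π g) v ∈ C := hmaps g v hvC
    have hgvn : ‖(π g) v‖ = δ := by rw [(π g).norm_map, hvnorm]
    have hmid : (1 / 2 : ℝ) • v + (1 / 2 : ℝ) • ((π g) v) ∈ C :=
      hconv hvC hgv (by norm_num) (by norm_num) (by norm_num)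
    have hmideq : (1 / 2 : ℝ) • v + (1 / 2 : ℝ) • ((π g) v)
        = (1 / 2 : ℝ) • (v + (π g) v) := by rw [smul_add]
    have hmidnorm : δ ≤ (1 / 2) * ‖v + (π g) v‖ := by
      have h := hδle _ hmid
      rwa [hmideq, norm_smul, Real.norm_eq_abs,
        abs_of_pos (by norm_num : (0:ℝ) < 1/2)] at h
    have hpar := parallelogram_law_with_norm ℝ v ((π g) v)
    have hδnn : 0 ≤ δ := hvnorm ▸ norm_nonneg v
    have hzero : ‖v - (π g) v‖ * ‖v - (π g) v‖ ≤ 0 := by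
      nlinarith [hpar, hvnorm, hgvn, hmidnorm, norm_nonneg (v + (π g) v)]
    have hz : ‖v - (π g) v‖ = 0 :=
      le_antisymm (by nlinarith [norm_nonneg (v - (π g) v)]) (norm_nonneg _)
    exact (sub_eq_zero.mp (norm_eq_zero.mp hz)).symm
  have hv0 : v = 0 := hfix v hvfix
  have h0C : (0 : H) ∈ C := hv0 ▸ hvC
  have hfin := hCball h0C
  rw [Metric.mem_closedBall, dist_zero_left] at hfin
  linarith
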